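/- Let T > 0 and let x, y be real numbers with |y| < π. Then |log(T/(1 + e^{-(x+iy)}))| ≤ |log T| + log(1 + e^{-x}) / cos(y/2). -/

import Mathlib

open Complex Real MeasureTheory Filter Set

private lemma abs_lower (y : ℝ) (hy : |y| < Real.pi) (t : ℝ) :
    (1 + Real.exp (-t)) * Real.cos (y / 2) ≤
      ‖1 + Complex.exp (-(t + y * Complex.I))‖ := by
  obtain ⟨hy1, hy2⟩ := abs_lt.mp hy
  have hc : 0 < Real.cos (y / 2) :=
    Real.cos_pos_of_mem_Ioo ⟨by linarith, by linarith⟩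
  set u := Real.exp (-t) with hu
  have hu0 : 0 < u := Real.exp_pos _
  have hre : (1 + Complex.exp (-(t + y * Complex.I))).re = 1 + u * Real.cos y := by
    simp [Complex.exp_re, Real.cos_neg, hu]
  have him : (1 + Complex.exp (-(t + y * Complex.I))).im = -(u * Real.sin y) := by
    simp [Complex.exp_im, Real.sin_neg, hu]
  have hsq : ((1 + u) * Real.cos (y / 2)) ^ 2 ≤
      ‖1 + Complex.exp (-(t + y * Complex.I))‖ ^ 2 := by
    rw [Complex.sq_norm, Complex.normSq_apply, hre, him]
    have h1 : Real.sin y ^ 2 + Real.cos y ^ 2 = 1 := Real.sin_sq_add_cos_sq y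
    have h2 : Real.cos (y / 2) ^ 2 = 1 / 2 + Real.cos y / 2 := by
      have := Real.cos_sq (y / 2)
      rwa [show 2 * (y / 2) = y by ring] at this
    have h3 : Real.cos y ≤ 1 := Real.cos_le_one y
    nlinarith [sq_nonneg (1 - u), sq_nonneg (u * Real.sin y), mul_pos hu0 hu0]
  have h0 : 0 ≤ (1 + u) * Real.cos (y / 2) := by positivity
  nlinarith [norm_nonneg (1 + Complex.exp (-(t + y * Complex.I)))]

private lemma mem_slit (y : ℝ) (hy : |y| < Real.pi) (t : ℝ) :
    1 + Complex.exp (-(t + y * Complex.I)) ∈ Complex.slitPlane := by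
  obtain ⟨hy1, hy2⟩ := abs_lt.mp hy
  have hre : (1 + Complex.exp (-(t + y * Complex.I))).re
      = 1 + Real.exp (-t) * Real.cos y := by
    simp [Complex.exp_re, Real.cos_neg]
  have him : (1 + Complex.exp (-(t + y * Complex.I))).im
      = -(Real.exp (-t) * Real.sin y) := by
    simp [Complex.exp_im, Real.sin_neg]
  rcases eq_or_ne (Real.sin y) 0 with h | h
  · have hy0 : y = 0 := (Real.sin_eq_zero_iff_of_lt_of_lt hy1 hy2).mp h
    left
    rw [hre, hy0]
    simp
    positivity
  · right
    rw [him]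
    simp [h, (Real.exp_pos (-t)).ne']

private lemma core (x y : ℝ) (hy : |y| < Real.pi) :
    ‖Complex.log (1 + Complex.exp (-(x + y * Complex.I)))‖ ≤
      Real.log (1 + Real.exp (-x)) / Real.cos (y / 2) := by
  obtain ⟨hy1, hy2⟩ := abs_lt.mp hy
  have hc : 0 < Real.cos (y / 2) :=
    Real.cos_pos_of_mem_Ioo ⟨by linarith, by linarith⟩
  set c := Real.cos (y / 2) with hcdef
  -- the complex function and its derivative
  set w : ℝ → ℂ := fun t => 1 + Complex.exp (-(t + y * Complex.I)) with hwdef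
  have hwpos : ∀ t : ℝ, 0 < ‖w t‖ := fun t =>
    lt_of_lt_of_le (by positivity) (abs_lower y hy t)
  have hwne : ∀ t : ℝ, w t ≠ 0 := fun t => by
    intro h; simpa [h] using hwpos t
  set F : ℝ → ℂ := fun t => Complex.log (w t) with hFdef
  set F' : ℝ → ℂ := fun t =>
    -Complex.exp (-(t + y * Complex.I)) / (1 + Complex.exp (-(t + y * Complex.I))) with hF'def
  have hderiv : ∀ t : ℝ, HasDerivAt F (F' t) t := by
    intro t
    have h1 : HasDerivAt (fun z : ℂ => -(z + y * Complex.I)) (-1) t :=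
      ((hasDerivAt_id (t : ℂ)).add_const _).neg
    have h2 : HasDerivAt (fun z : ℂ => Complex.exp (-(z + y * Complex.I)))
        (Complex.exp (-(t + y * Complex.I)) * -1) t := h1.cexp
    have h3 : HasDerivAt (fun z : ℂ => 1 + Complex.exp (-(z + y * Complex.I)))
        (Complex.exp (-(t + y * Complex.I)) * -1) t := h2.const_add 1
    have h4 := (h3.comp_ofReal).clog_real (mem_slit y hy t)
    simpa [hFdef, hF'def, hwdef, neg_div, div_neg, mul_comm] using h4
  -- the real comparison function and its derivative
  set G : ℝ → ℝ := fun t => Real.log (1 + Real.exp (-t)) with hGdef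
  set G' : ℝ → ℝ := fun t => -Real.exp (-t) / (1 + Real.exp (-t)) with hG'def
  have hGpos : ∀ t : ℝ, (0:ℝ) < 1 + Real.exp (-t) := fun t => by positivity
  have hGderiv : ∀ t : ℝ, HasDerivAt G (G' t) t := by
    intro t
    have h1 : HasDerivAt (fun s : ℝ => -s) (-1) t := (hasDerivAt_id t).neg
    have h2 : HasDerivAt (fun s : ℝ => Real.exp (-s)) (Real.exp (-t) * -1) t := h1.exp
    have h3 : HasDerivAt (fun s : ℝ => 1 + Real.exp (-s)) (Real.exp (-t) * -1) t :=
      h2.const_add 1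
    have h4 := h3.log (hGpos t).ne'
    simpa [hGdef, hG'def, neg_div, mul_comm] using h4
  -- norm bound on F'
  have hG'alt : ∀ t : ℝ, -G' t / c = Real.exp (-t) / ((1 + Real.exp (-t)) * c) := by
    intro t
    simp only [hG'def]
    field_simp
  have hF'norm : ∀ t : ℝ, ‖F' t‖ ≤ -G' t / c := by
    intro t
    have h1 : ‖F' t‖ = Real.exp (-t) / ‖w t‖ := by
      simp [hF'def, hwdef, map_div₀, Complex.norm_exp]
    rw [h1, hG'alt t]
    exact div_le_div_of_nonneg_left (Real.exp_pos _).le (by positivity) (abs_lower y hy t)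
  -- integrability
  have hexp_int : IntegrableOn (fun t : ℝ => Real.exp (-t)) (Ioi x) := by
    simpa using exp_neg_integrableOn_Ioi x one_pos
  have hG'cont : Continuous G' := by
    apply Continuous.div
    · continuity
    · continuity
    · exact fun t => (hGpos t).ne'
  have hG'int : IntegrableOn G' (Ioi x) := by
    refine Integrable.mono' hexp_int (hG'cont.aestronglyMeasurable.restrict) ?_
    filter_upwards with t
    rw [hG'def, Real.norm_eq_abs, abs_div, abs_neg, abs_of_pos (Real.exp_pos _),
      abs_of_pos (hGpos t)]
    rw [div_le_iff₀ (hGpos t)]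
    nlinarith [Real.exp_pos (-t), Real.exp_pos (-t)]
  have hwcont : Continuous w := by
    rw [hwdef]
    fun_prop
  have hF'cont : Continuous F' := by
    apply Continuous.div
    · fun_prop
    · fun_prop
    · exact fun t => hwne t
  have hF'int : IntegrableOn F' (Ioi x) := by
    refine Integrable.mono' ((hexp_int.div_const c)) (hF'cont.aestronglyMeasurable.restrict) ?_
    filter_upwards with t
    calc ‖F' t‖ = ‖F' t‖ := rfl
      _ ≤ -G' t / c := hF'norm t
      _ ≤ Real.exp (-t) / c := by
          rw [hG'alt t]
          exact div_le_div_of_nonneg_left (Real.exp_pos _).le hc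
            (by nlinarith [Real.exp_pos (-t)])
  -- limits at infinity
  have hexp_tendsto : Tendsto (fun t : ℝ => Complex.exp (-(t + y * Complex.I))) atTop (nhds 0) := by
    rw [tendsto_zero_iff_norm_tendsto_zero]
    have : (fun t : ℝ => ‖Complex.exp (-(t + y * Complex.I))‖) = fun t => Real.exp (-t) := by
      funext t
      simp [Complex.norm_exp]
    rw [this]
    exact Real.tendsto_exp_neg_atTop_nhds_zero
  have hFlim : Tendsto F atTop (nhds 0) := by
    have hw1 : Tendsto w atTop (nhds 1) := by
      have := hexp_tendsto.const_add (1 : ℂ)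
      simpa [hwdef] using this
    have hlog : ContinuousAt Complex.log 1 :=
      continuousAt_clog one_mem_slitPlane
    have := hlog.tendsto.comp hw1
    simpa [hFdef, Complex.log_one, Function.comp_def] using this
  have hGlim : Tendsto G atTop (nhds 0) := by
    have h1 : Tendsto (fun t : ℝ => Real.exp (-t)) atTop (nhds 0) :=
      Real.tendsto_exp_neg_atTop_nhds_zero
    have h2 : Tendsto (fun t : ℝ => 1 + Real.exp (-t)) atTop (nhds 1) := by
      simpa using h1.const_add 1
    have := (Real.continuousAt_log one_ne_zero).tendsto.comp h2
    simpa [hGdef, Real.log_one, Function.comp_def] using this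
  -- FTC
  have hFeq : ∫ t in Ioi x, F' t = 0 - F x :=
    integral_Ioi_of_hasDerivAt_of_tendsto (hderiv x).continuousAt.continuousWithinAt
      (fun t _ => hderiv t) hF'int hFlim
  have hGeq : ∫ t in Ioi x, G' t = 0 - G x :=
    integral_Ioi_of_hasDerivAt_of_tendsto (hGderiv x).continuousAt.continuousWithinAt
      (fun t _ => hGderiv t) hG'int hGlim
  -- conclude
  have key : ‖F x‖ ≤ G x / c := by
    have h1 : ‖F x‖ = ‖∫ t in Ioi x, F' t‖ := by
      rw [hFeq]
      simp
    rw [h1]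
    calc ‖∫ t in Ioi x, F' t‖ ≤ ∫ t in Ioi x, ‖F' t‖ := norm_integral_le_integral_norm _
      _ ≤ ∫ t in Ioi x, -G' t / c := by
          apply integral_mono hF'int.norm ((hG'int.neg).div_const c)
          exact fun t => hF'norm t
      _ = (∫ t in Ioi x, -G' t) / c := by rw [integral_div]
      _ = G x / c := by rw [integral_neg, hGeq]; ring_nf
  simpa [hFdef, hwdef, hGdef] using key

theorem stmt_3 (T : ℝ) (hT : 0 < T) (x y : ℝ) (hy : |y| < Real.pi) :
    ‖Complex.log ((T : ℂ) / (1 + Complex.exp (-(x + y * Complex.I))))‖ ≤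
      |Real.log T| + Real.log (1 + Real.exp (-x)) / Real.cos (y / 2) := by
  set w : ℂ := 1 + Complex.exp (-(x + y * Complex.I)) with hwdef
  have hslit : w ∈ Complex.slitPlane := mem_slit y hy x
  have hwne : w ≠ 0 := Complex.slitPlane_ne_zero hslit
  have harg : w.arg ≠ Real.pi := Complex.slitPlane_arg_ne_pi hslit
  rw [div_eq_mul_inv, Complex.log_ofReal_mul hT (inv_ne_zero hwne), Complex.log_inv _ harg]
  calc ‖(Real.log T : ℂ) + -Complex.log w‖
      ≤ ‖(Real.log T : ℂ)‖ + ‖-Complex.log w‖ :=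
        norm_add_le _ _
    _ = |Real.log T| + ‖Complex.log w‖ := by
        rw [Complex.norm_real, Real.norm_eq_abs, norm_neg]
    _ ≤ |Real.log T| + Real.log (1 + Real.exp (-x)) / Real.cos (y / 2) := by
        exact add_le_add_right (core x y hy) _
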